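/- Suppose that (x_1,…,x_n)^a ⊄ I (as ideals of S). Then Hom_T(J, T/J)_{(−1,−1)} = 0. -/

import Mathlib

open MvPolynomial

noncomputable section

/-- The bigrading on `T = k[x_1,…,x_n,y_1,…,y_n]` (with the `x`-variables indexed by
`Sum.inl` and the `y`-variables by `Sum.inr`): each `x_i` has bidegree `(1,0)` and
each `y_i` has bidegree `(0,1)`.  We use `ℤ × ℤ` so that components of negative
bidegree make sense (they are zero). -/
def bidegWeight (n : ℕ) : (Fin n ⊕ Fin n) → ℤ × ℤ :=
  Sum.elim (fun _ => ((1 : ℤ), (0 : ℤ))) (fun _ => ((0 : ℤ), (1 : ℤ)))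

/-- A homogeneous ideal of `S = k[x_1,…,x_n]`: an ideal containing all homogeneous
components of its elements. -/
def IsHomogeneousIdeal {k : Type} [Field k] {n : ℕ}
    (I : Ideal (MvPolynomial (Fin n) k)) : Prop :=
  ∀ f ∈ I, ∀ d : ℕ, homogeneousComponent d f ∈ I

/-- A bihomogeneous ideal of `T`: an ideal containing all bihomogeneous components
of its elements. -/
def IsBihomogeneousIdeal {k : Type} [Field k] {n : ℕ}
    (P : Ideal (MvPolynomial (Fin n ⊕ Fin n) k)) : Prop :=
  ∀ f ∈ P, ∀ γ δ : ℤ, weightedHomogeneousComponent (bidegWeight n) (γ, δ) f ∈ P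

/-- `depth(S₊, S/I) ≥ d`: there exist `d` homogeneous elements of positive degree
of `S` forming a regular sequence on the `S`-module `S/I`. -/
def DepthGE {k : Type} [Field k] {n : ℕ} (I : Ideal (MvPolynomial (Fin n) k))
    (d : ℕ) : Prop :=
  ∃ fs : List (MvPolynomial (Fin n) k), fs.length = d ∧
    (∀ f ∈ fs, ∃ m : ℕ, 0 < m ∧ f ∈ homogeneousSubmodule (Fin n) k m) ∧
    RingTheory.Sequence.IsRegular (MvPolynomial (Fin n) k ⧸ I) fs

/-- The ideal `m_x = (x_1,…,x_n)` of `T`. -/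
def mxIdeal (k : Type) [Field k] (n : ℕ) : Ideal (MvPolynomial (Fin n ⊕ Fin n) k) :=
  Ideal.span (Set.range fun i : Fin n => X (Sum.inl i))

/-- The ideal `m_y = (y_1,…,y_n)` of `T`. -/
def myIdeal (k : Type) [Field k] (n : ℕ) : Ideal (MvPolynomial (Fin n ⊕ Fin n) k) :=
  Ideal.span (Set.range fun i : Fin n => X (Sum.inr i))

/-- The quadric `Q = x_1y_1 + ⋯ + x_ny_n ∈ T`. -/
def Qpoly (k : Type) [Field k] (n : ℕ) : MvPolynomial (Fin n ⊕ Fin n) k :=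
  ∑ i : Fin n, X (Sum.inl i) * X (Sum.inr i)

/-- The TNT frame `J = I·T + m_x^{a+1} + m_y^{b+1} + (Q)` of an ideal `I ⊆ S`. -/
def frameIdeal {k : Type} [Field k] {n : ℕ} (I : Ideal (MvPolynomial (Fin n) k))
    (a b : ℕ) : Ideal (MvPolynomial (Fin n ⊕ Fin n) k) :=
  I.map (rename Sum.inl) ⊔ (mxIdeal k n) ^ (a + 1) ⊔ (myIdeal k n) ^ (b + 1)
    ⊔ Ideal.span {Qpoly k n}

/-- A `T`-linear map `φ : N → T/K` (where `N`, `K` are ideals of `T`) has bidegree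
`(α,β)` if it maps every bihomogeneous element of `N` of bidegree `(γ,δ)` into the
image in `T/K` of the bidegree-`(γ+α, δ+β)` component of `T`. -/
def HomOfBidegree {k : Type} [Field k] {n : ℕ}
    (N K : Ideal (MvPolynomial (Fin n ⊕ Fin n) k)) (α β : ℤ)
    (φ : N →ₗ[MvPolynomial (Fin n ⊕ Fin n) k]
      (MvPolynomial (Fin n ⊕ Fin n) k ⧸ K)) : Prop :=
  ∀ (γ δ : ℤ) (f : MvPolynomial (Fin n ⊕ Fin n) k) (hf : f ∈ N),
    IsWeightedHomogeneous (bidegWeight n) f (γ, δ) →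
      ∃ g : MvPolynomial (Fin n ⊕ Fin n) k,
        IsWeightedHomogeneous (bidegWeight n) g (γ + α, δ + β) ∧
        φ ⟨f, hf⟩ = Ideal.Quotient.mk K g

/-- The `k`-derivation `D_A` of `T` with `D_A(x_i) = 0` and
`D_A(y_i) = Σ_j A_{ij}·x_j`, applied to `f`. -/
def derA {k : Type} [Field k] {n : ℕ} (A : Matrix (Fin n) (Fin n) k)
    (f : MvPolynomial (Fin n ⊕ Fin n) k) : MvPolynomial (Fin n ⊕ Fin n) k :=
  ∑ i : Fin n, (∑ j : Fin n, A i j • X (Sum.inl j)) * pderiv (Sum.inr i) f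

/-- The ideal `p = (y_1²,…,y_n²) + y_1·m_y ⊆ T` used in the characteristic-two
tweaked frame (`h` witnesses `0 < n` so that `y_1` makes sense). -/
def pIdeal (k : Type) [Field k] (n : ℕ) (h : 0 < n) :
    Ideal (MvPolynomial (Fin n ⊕ Fin n) k) :=
  Ideal.span ((Set.range fun i : Fin n => (X (Sum.inr i) : MvPolynomial (Fin n ⊕ Fin n) k) ^ 2)
    ∪ (Set.range fun i : Fin n => X (Sum.inr (⟨0, h⟩ : Fin n)) * X (Sum.inr i)))

/-- The tweaked frame `J' = I·T + m_x^{a+1} + p + (Q)` of size `a` for `I`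
(characteristic two). -/
def tweakedFrameIdeal {k : Type} [Field k] {n : ℕ} (I : Ideal (MvPolynomial (Fin n) k))
    (a : ℕ) (h : 0 < n) : Ideal (MvPolynomial (Fin n ⊕ Fin n) k) :=
  I.map (rename Sum.inl) ⊔ (mxIdeal k n) ^ (a + 1) ⊔ pIdeal k n h
    ⊔ Ideal.span {Qpoly k n}

/-- Abbreviation for `S = k[x_1,…,x_n]`. -/
abbrev Spoly (k : Type) [Field k] (n : ℕ) := MvPolynomial (Fin n) k

/-- Abbreviation for `T = k[x_1,…,x_n,y_1,…,y_n]`. -/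
abbrev Tpoly (k : Type) [Field k] (n : ℕ) := MvPolynomial (Fin n ⊕ Fin n) k


namespace StmtAux

open Pointwise

variable {k : Type} [Field k] {n : ℕ} {σ : Type}

lemma degree_add (u v : σ →₀ ℕ) : Finsupp.degree (u + v) = u.degree + v.degree := by
  simp [Finsupp.degree_eq_weight_one]

lemma degree_single (i : σ) (m : ℕ) : Finsupp.degree (Finsupp.single i m) = m := by
  classical
  rcases eq_or_ne m 0 with rfl | h
  · simp
  · simp [Finsupp.degree_apply, Finsupp.support_single_ne_zero _ h]

lemma weight_fst_nonneg (d : (Fin n ⊕ Fin n) →₀ ℕ) :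
    0 ≤ (Finsupp.weight (bidegWeight n) d).1 := by
  rw [Finsupp.weight_apply, Finsupp.sum, Prod.fst_sum]
  apply Finset.sum_nonneg
  rintro (i | i) _ <;> simp [bidegWeight]

lemma weight_snd_nonneg (d : (Fin n ⊕ Fin n) →₀ ℕ) :
    0 ≤ (Finsupp.weight (bidegWeight n) d).2 := by
  rw [Finsupp.weight_apply, Finsupp.sum, Prod.snd_sum]
  apply Finset.sum_nonneg
  rintro (i | i) _ <;> simp [bidegWeight]

lemma wh_eq_zero {g : MvPolynomial (Fin n ⊕ Fin n) k} {γ δ : ℤ}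
    (h : IsWeightedHomogeneous (bidegWeight n) g (γ, δ)) (hneg : γ < 0 ∨ δ < 0) : g = 0 := by
  rw [MvPolynomial.eq_zero_iff]
  intro d
  by_contra hc
  have hw := h hc
  rcases hneg with hneg | hneg
  · have := weight_fst_nonneg d
    rw [hw] at this
    exact absurd this (not_le.mpr hneg)
  · have := weight_snd_nonneg d
    rw [hw] at this
    exact absurd this (not_le.mpr hneg)

lemma wh_zero_eq_C {g : MvPolynomial (Fin n ⊕ Fin n) k}
    (h : IsWeightedHomogeneous (bidegWeight n) g ((0 : ℤ), (0 : ℤ))) :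
    g = C (constantCoeff g) := by
  have key : ∀ d, d ≠ 0 → coeff d g = 0 := by
    intro d hd
    by_contra hc
    have hw := h hc
    have h1 : (Finsupp.weight (bidegWeight n) d).1 = 0 := by rw [hw]
    have h2 : (Finsupp.weight (bidegWeight n) d).2 = 0 := by rw [hw]
    rw [Finsupp.weight_apply, Finsupp.sum, Prod.fst_sum] at h1
    rw [Finsupp.weight_apply, Finsupp.sum, Prod.snd_sum] at h2
    have e1 := (Finset.sum_eq_zero_iff_of_nonneg (fun i _ => by
      rcases i with i | i <;> simp [bidegWeight])).mp h1
    have e2 := (Finset.sum_eq_zero_iff_of_nonneg (fun i _ => by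
      rcases i with i | i <;> simp [bidegWeight])).mp h2
    apply hd
    ext j
    rcases eq_or_ne (d j) 0 with h0 | h0
    · simp [h0]
    · exfalso
      have hj : j ∈ d.support := Finsupp.mem_support_iff.mpr h0
      rcases j with j | j
      · have := e1 _ hj
        simp [bidegWeight] at this
        exact h0 this
      · have := e2 _ hj
        simp [bidegWeight] at this
        exact h0 this
  ext d
  rcases eq_or_ne d 0 with rfl | hd
  · simp [constantCoeff_eq]
  · rw [key d hd, coeff_C, if_neg (Ne.symm hd)]

lemma weight_mapDomain_inl (d : Fin n →₀ ℕ) :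
    Finsupp.weight (bidegWeight n) (d.mapDomain Sum.inl) = ((d.degree : ℤ), 0) := by
  rw [Finsupp.weight_apply, Finsupp.sum_mapDomain_index_inj Sum.inl_injective]
  rw [Finsupp.sum, Prod.ext_iff, Prod.fst_sum, Prod.snd_sum]
  constructor
  · simp only [bidegWeight, Sum.elim_inl, Prod.smul_mk, smul_eq_mul, mul_one, mul_zero,
      Finsupp.degree_apply]
    push_cast
    simp [nsmul_eq_mul]
  · simp [bidegWeight]

lemma rename_inl_wh {p : MvPolynomial (Fin n) k} {m : ℕ} (hp : p.IsHomogeneous m) :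
    IsWeightedHomogeneous (bidegWeight n) (rename Sum.inl p) ((m : ℤ), 0) := by
  intro d hd
  obtain ⟨u, rfl, hu⟩ := coeff_rename_ne_zero _ _ _ hd
  rw [weight_mapDomain_inl]
  have : u.degree = m := by
    have := hp hu
    rw [Finsupp.degree_eq_weight_one]; exact this
  rw [this]

lemma Qpoly_wh : IsWeightedHomogeneous (bidegWeight n) (Qpoly k n) ((1 : ℤ), (1 : ℤ)) := by
  apply IsWeightedHomogeneous.sum
  intro i _
  have h1 := isWeightedHomogeneous_X (R := k) (bidegWeight n) (Sum.inl i)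
  have h2 := isWeightedHomogeneous_X (R := k) (bidegWeight n) (Sum.inr i)
  have := h1.mul h2
  simpa [bidegWeight] using this

lemma pow_inl_wh {m : ℕ} {t : MvPolynomial (Fin n ⊕ Fin n) k}
    (ht : t ∈ (Set.range fun i : Fin n => (X (Sum.inl i) : MvPolynomial (Fin n ⊕ Fin n) k)) ^ m) :
    IsWeightedHomogeneous (bidegWeight n) t ((m : ℤ), 0) := by
  induction m generalizing t with
  | zero =>
    rw [pow_zero] at ht
    obtain rfl : t = 1 := ht
    exact isWeightedHomogeneous_one k (bidegWeight n)
  | succ m ih =>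
    rw [pow_succ] at ht
    obtain ⟨u, hu, v, hv, rfl⟩ := Set.mem_mul.mp ht
    obtain ⟨i, rfl⟩ := hv
    have := (ih hu).mul (isWeightedHomogeneous_X (R := k) (bidegWeight n) (Sum.inl i))
    rw [show bidegWeight n (Sum.inl i) = (1, 0) from rfl, Prod.mk_add_mk] at this
    convert this using 2 <;> push_cast <;> ring

lemma pow_inr_wh {m : ℕ} {t : MvPolynomial (Fin n ⊕ Fin n) k}
    (ht : t ∈ (Set.range fun i : Fin n => (X (Sum.inr i) : MvPolynomial (Fin n ⊕ Fin n) k)) ^ m) :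
    IsWeightedHomogeneous (bidegWeight n) t ((0 : ℤ), (m : ℤ)) := by
  induction m generalizing t with
  | zero =>
    rw [pow_zero] at ht
    obtain rfl : t = 1 := ht
    exact isWeightedHomogeneous_one k (bidegWeight n)
  | succ m ih =>
    rw [pow_succ] at ht
    obtain ⟨u, hu, v, hv, rfl⟩ := Set.mem_mul.mp ht
    obtain ⟨i, rfl⟩ := hv
    have := (ih hu).mul (isWeightedHomogeneous_X (R := k) (bidegWeight n) (Sum.inr i))
    rw [show bidegWeight n (Sum.inr i) = (0, 1) from rfl, Prod.mk_add_mk] at this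
    convert this using 2 <;> push_cast <;> ring

/-- The ideal of polynomials all of whose monomials have degree ≥ m. -/
def minDegIdeal (k : Type) [Field k] (σ : Type) (m : ℕ) : Ideal (MvPolynomial σ k) where
  carrier := {p | ∀ d ∈ p.support, m ≤ d.degree}
  zero_mem' := by simp
  add_mem' := by
    classical
    intro p q hp hq d hd
    rcases Finset.mem_union.mp (MvPolynomial.support_add hd) with h | h
    · exact hp d h
    · exact hq d h
  smul_mem' := by
    classical
    intro c p hp d hd
    rw [smul_eq_mul] at hd
    obtain ⟨d1, hd1, d2, hd2, rfl⟩ := Finset.mem_add.mp (MvPolynomial.support_mul c p hd)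
    rw [degree_add]
    exact le_add_of_le_right (hp d2 hd2)

lemma span_X_pow_le_minDeg (m : ℕ) :
    (Ideal.span (Set.range (X : σ → MvPolynomial σ k))) ^ m ≤ minDegIdeal k σ m := by
  induction m with
  | zero => intro p _ d _; exact Nat.zero_le _
  | succ m ih =>
    rw [pow_succ]
    rw [Ideal.mul_le]
    intro r hr s hs
    have hr' := ih hr
    have hs' : s ∈ minDegIdeal k σ 1 := by
      have : Set.range (X : σ → MvPolynomial σ k) ⊆
          (minDegIdeal k σ 1 : Set (MvPolynomial σ k)) := by
        rintro _ ⟨i, rfl⟩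
        intro d hd
        classical
        rw [MvPolynomial.support_X] at hd
        rw [Finset.mem_singleton] at hd
        subst hd
        rw [degree_single]
      exact Ideal.span_le.mpr this hs
    intro d hd
    classical
    obtain ⟨d1, hd1, d2, hd2, rfl⟩ := Finset.mem_add.mp (MvPolynomial.support_mul r s hd)
    rw [degree_add]
    exact add_le_add (hr' d1 hd1) (hs' d2 hd2)

lemma monomial_mem_pow (d : σ →₀ ℕ) :
    monomial d (1 : k) ∈ (Ideal.span (Set.range (X : σ → MvPolynomial σ k))) ^ d.degree := by
  classical
  generalize hN : d.degree = N
  induction N generalizing d with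
  | zero =>
    have : d = 0 := (Finsupp.degree_eq_zero_iff d).mp hN
    subst this
    rw [pow_zero, Ideal.one_eq_top]
    exact Submodule.mem_top
  | succ m ih =>
    have hd0 : d ≠ 0 := by
      intro h; subst h; simp [map_zero] at hN
    obtain ⟨i, hi⟩ : ∃ i, d i ≠ 0 := by
      by_contra hc; push_neg at hc; exact hd0 (Finsupp.ext fun i => hc i)
    have hle : Finsupp.single i 1 ≤ d := Finsupp.single_le_iff.mpr (Nat.one_le_iff_ne_zero.mpr hi)
    set d' := d - Finsupp.single i 1 with hd'
    have hsum : d' + Finsupp.single i 1 = d := tsub_add_cancel_of_le hle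
    have hdeg : d'.degree = m := by
      have := degree_add d' (Finsupp.single i 1)
      rw [hsum, hN, degree_single] at this
      omega
    have heq : monomial d (1 : k) = monomial d' 1 * X i := by
      rw [X, monomial_mul, mul_one, hsum]
    rw [heq, pow_succ]
    exact Ideal.mul_mem_mul (ih d' hdeg) (Ideal.subset_span ⟨i, rfl⟩)

lemma exists_le_degree (v : σ →₀ ℕ) (m : ℕ) (h : m ≤ v.degree) :
    ∃ v' : σ →₀ ℕ, v' ≤ v ∧ v'.degree = m := by
  induction m with
  | zero => exact ⟨0, zero_le, map_zero _⟩
  | succ m ih =>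
    obtain ⟨u, hu, hud⟩ := ih (le_trans (Nat.le_succ m) h)
    have hne : u ≠ v := by
      intro e; subst e; omega
    obtain ⟨i, hi⟩ : ∃ i, u i < v i := by
      by_contra hc; push_neg at hc
      exact hne (le_antisymm hu (Finsupp.le_def.mpr hc))
    refine ⟨u + Finsupp.single i 1, ?_, ?_⟩
    · rw [Finsupp.le_def]
      intro j
      rcases eq_or_ne j i with rfl | hji
      · simp only [Finsupp.add_apply, Finsupp.single_eq_same]
        omega
      · simp only [Finsupp.add_apply, Finsupp.single_eq_of_ne hji, add_zero]
        exact Finsupp.le_def.mp hu j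
    · rw [degree_add, hud, degree_single]

lemma exists_monomial_not_mem {I : Ideal (MvPolynomial (Fin n) k)} {a : ℕ}
    (hma : ¬ ((Ideal.span (Set.range (X : Fin n → MvPolynomial (Fin n) k))) ^ a ≤ I)) :
    ∃ d : Fin n →₀ ℕ, d.degree = a ∧ monomial d (1 : k) ∉ I := by
  by_contra h
  push_neg at h
  apply hma
  intro p hp
  rw [p.as_sum]
  apply Ideal.sum_mem
  intro v hv
  have hva : a ≤ v.degree := span_X_pow_le_minDeg a hp v hv
  obtain ⟨v', hv'le, hv'deg⟩ := exists_le_degree v a hva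
  have : monomial v (coeff v p) = monomial v' 1 * monomial (v - v') (coeff v p) := by
    rw [monomial_mul, one_mul, add_tsub_cancel_of_le hv'le]
  rw [this]
  exact Ideal.mul_mem_right _ _ (h v' hv'deg)

lemma homComp_eq_zero_of_minDeg {p : MvPolynomial σ k} {m j : ℕ}
    (hp : p ∈ minDegIdeal k σ m) (hj : j < m) : homogeneousComponent j p = 0 := by
  apply homogeneousComponent_eq_zero'
  intro d hd hdeg
  have := hp d hd
  omega

/-- The evaluation `y ↦ 0` map `T → S`. -/
def piHom (k : Type) [Field k] (n : ℕ) :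
    MvPolynomial (Fin n ⊕ Fin n) k →ₐ[k] MvPolynomial (Fin n) k :=
  aeval (Sum.elim X (fun _ => 0))

lemma piHom_rename (p : MvPolynomial (Fin n) k) : piHom k n (rename Sum.inl p) = p := by
  rw [piHom, aeval_rename]
  simp only [Function.comp_def, Sum.elim_inl]
  exact aeval_X_left_apply p

lemma not_mem_frame {I : Ideal (MvPolynomial (Fin n) k)} (hIhom : IsHomogeneousIdeal I)
    {a b : ℕ} {d : Fin n →₀ ℕ} (hdeg : d.degree = a) (hdI : monomial d (1 : k) ∉ I) :
    rename Sum.inl (monomial d (1 : k)) ∉ frameIdeal I a b := by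
  intro hmem
  set π := piHom k n
  set P := Ideal.span (Set.range (X : Fin n → MvPolynomial (Fin n) k))
  set K := I ⊔ P ^ (a + 1) with hK
  have hJK : frameIdeal I a b ≤ Ideal.comap π K := by
    refine sup_le (sup_le (sup_le ?_ ?_) ?_) ?_
    · rw [Ideal.map_le_iff_le_comap]
      intro p hp
      rw [Ideal.mem_comap, Ideal.mem_comap, piHom_rename]
      exact Ideal.mem_sup_left hp
    · have h1 : Ideal.map π ((mxIdeal k n) ^ (a + 1)) ≤ K := by
        rw [Ideal.map_pow]
        have : Ideal.map π (mxIdeal k n) = P := by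
          rw [mxIdeal, Ideal.map_span]
          congr 1
          ext q
          constructor
          · rintro ⟨_, ⟨i, rfl⟩, rfl⟩
            exact ⟨i, by simp [π, piHom]⟩
          · rintro ⟨i, rfl⟩
            exact ⟨X (Sum.inl i), ⟨i, rfl⟩, by simp [π, piHom]⟩
        rw [this]
        exact le_sup_right
      exact Ideal.map_le_iff_le_comap.mp h1
    · have h1 : Ideal.map π ((myIdeal k n) ^ (b + 1)) ≤ K := by
        have h0 : Ideal.map π (myIdeal k n) ≤ ⊥ := by
          rw [myIdeal, Ideal.map_span, Ideal.span_le]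
          rintro _ ⟨_, ⟨i, rfl⟩, rfl⟩
          simp [π, piHom]
        calc Ideal.map π ((myIdeal k n) ^ (b + 1)) = (Ideal.map π (myIdeal k n)) ^ (b + 1) :=
              Ideal.map_pow _ _ _
          _ ≤ Ideal.map π (myIdeal k n) := Ideal.pow_le_self (Nat.succ_ne_zero b)
          _ ≤ ⊥ := h0
          _ ≤ K := bot_le
      exact Ideal.map_le_iff_le_comap.mp h1
    · have h1 : Ideal.map π (Ideal.span {Qpoly k n}) ≤ K := by
        rw [Ideal.map_span, Ideal.span_le]
        rintro _ ⟨q, rfl, rfl⟩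
        have : π (Qpoly k n) = 0 := by
          simp [π, piHom, Qpoly]
        rw [this]
        exact K.zero_mem
      exact Ideal.map_le_iff_le_comap.mp h1
  have hfK : monomial d (1 : k) ∈ K := by
    have := hJK hmem
    rw [Ideal.mem_comap, piHom_rename] at this
    exact this
  obtain ⟨i, hiI, h, hhP, hsum⟩ := Submodule.mem_sup.mp hfK
  apply hdI
  have hmono : homogeneousComponent a (monomial d (1:k)) = monomial d 1 := by
    have hm : monomial d (1:k) ∈ homogeneousSubmodule (Fin n) k a :=
      isHomogeneous_monomial _ hdeg
    rw [homogeneousComponent_of_mem hm, if_pos rfl]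
  have hh0 : homogeneousComponent a h = 0 :=
    homComp_eq_zero_of_minDeg (span_X_pow_le_minDeg (a+1) hhP) (Nat.lt_succ_self a)
  have : monomial d (1:k) = homogeneousComponent a i := by
    rw [← hmono, ← hsum, map_add, hh0, add_zero]
  rw [this]
  exact hIhom i hiI a

end StmtAux

/-- if `m_x^a ⊄ I` then `Hom_T(J, T/J)_{(−1,−1)} = 0`. -/
theorem stmt9 {k : Type} [Field k] {n : ℕ} (hn : 1 ≤ n)
    (I : Ideal (Spoly k n)) (hIhom : IsHomogeneousIdeal I)
    (a b : ℕ) (ha : 2 ≤ a) (hb : 1 ≤ b)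
    (hma : ¬ ((Ideal.span (Set.range (X : Fin n → Spoly k n))) ^ a ≤ I))
    (J : Ideal (Tpoly k n)) (hJ : J = frameIdeal I a b)
    (φ : J →ₗ[Tpoly k n] (Tpoly k n ⧸ J))
    (hφ : HomOfBidegree J J (-1) (-1) φ) :
    φ = 0 := by
    classical
  open StmtAux Pointwise in
  subst hJ
  have hJeq : frameIdeal I a b = I.map (rename Sum.inl) ⊔ (mxIdeal k n) ^ (a + 1)
      ⊔ (myIdeal k n) ^ (b + 1) ⊔ Ideal.span {Qpoly k n} := rfl
  set W : Ideal (Tpoly k n) := Submodule.map (frameIdeal I a b).subtype (LinearMap.ker φ) with hW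
  have memW : ∀ {t : Tpoly k n} (ht : t ∈ frameIdeal I a b), φ ⟨t, ht⟩ = 0 → t ∈ W := by
    intro t ht h0
    exact ⟨⟨t, ht⟩, h0, rfl⟩
  have Wval : ∀ {t : Tpoly k n} (ht : t ∈ frameIdeal I a b), t ∈ W → φ ⟨t, ht⟩ = 0 := by
    rintro t ht ⟨v, hv, hvt⟩
    have : v = ⟨t, ht⟩ := Subtype.ext hvt
    rwa [this] at hv
  have vanish : ∀ {t : Tpoly k n} (ht : t ∈ frameIdeal I a b) (γ δ : ℤ),
      IsWeightedHomogeneous (bidegWeight n) t (γ, δ) → (γ + -1 < 0 ∨ δ + -1 < 0) →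
      φ ⟨t, ht⟩ = 0 := by
    intro t ht γ δ hwh hneg
    obtain ⟨g, hg, hval⟩ := hφ γ δ t ht hwh
    have hg0 : g = 0 := StmtAux.wh_eq_zero hg hneg
    rw [hval, hg0, map_zero]
  have hQJ : Qpoly k n ∈ frameIdeal I a b := by
    rw [hJeq]
    exact Submodule.mem_sup_right (Ideal.mem_span_singleton_self _)
  have hJW : frameIdeal I a b ≤ W := by
    rw [hJeq]
    refine sup_le (sup_le (sup_le ?_ ?_) ?_) ?_
    · -- I·T
      rw [Ideal.map_le_iff_le_comap]
      intro p hp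
      rw [Ideal.mem_comap]
      have hdecomp : (rename Sum.inl p : Tpoly k n)
          = ∑ j ∈ Finset.range (p.totalDegree + 1), rename Sum.inl (homogeneousComponent j p) := by
        conv_lhs => rw [← MvPolynomial.sum_homogeneousComponent p]
        rw [map_sum]
      rw [hdecomp]
      apply Submodule.sum_mem
      intro j _
      have hcomp : homogeneousComponent j p ∈ I := hIhom p hp j
      have hhom : (homogeneousComponent j p).IsHomogeneous j :=
        homogeneousComponent_isHomogeneous j p
      have htJ : rename Sum.inl (homogeneousComponent j p) ∈ frameIdeal I a b := by
        rw [hJeq]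
        exact Submodule.mem_sup_left (Submodule.mem_sup_left (Submodule.mem_sup_left
          (Ideal.mem_map_of_mem _ hcomp)))
      exact memW htJ (vanish htJ ((j : ℕ) : ℤ) 0 (StmtAux.rename_inl_wh hhom)
        (Or.inr (by norm_num)))
    · -- m_x^{a+1}
      have hsp : ∀ (s : Set (Tpoly k n)) (m : ℕ), Ideal.span s ^ m = Ideal.span (s ^ m) :=
        fun s m => Submodule.span_pow s m
      rw [mxIdeal, hsp, Ideal.span_le]
      intro t ht
      have htJ : t ∈ frameIdeal I a b := by
        rw [hJeq]
        refine Submodule.mem_sup_left (Submodule.mem_sup_left (Submodule.mem_sup_right ?_))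
        rw [mxIdeal, hsp]
        exact Ideal.subset_span ht
      exact memW htJ (vanish htJ ((a + 1 : ℕ) : ℤ) 0 (StmtAux.pow_inl_wh ht)
        (Or.inr (by norm_num)))
    · -- m_y^{b+1}
      have hsp : ∀ (s : Set (Tpoly k n)) (m : ℕ), Ideal.span s ^ m = Ideal.span (s ^ m) :=
        fun s m => Submodule.span_pow s m
      rw [myIdeal, hsp, Ideal.span_le]
      intro t ht
      have htJ : t ∈ frameIdeal I a b := by
        rw [hJeq]
        refine Submodule.mem_sup_left (Submodule.mem_sup_right ?_)
        rw [myIdeal, hsp]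
        exact Ideal.subset_span ht
      exact memW htJ (vanish htJ 0 ((b + 1 : ℕ) : ℤ) (StmtAux.pow_inr_wh ht)
        (Or.inl (by norm_num)))
    · -- (Q)
      rw [Ideal.span_le, Set.singleton_subset_iff]
      obtain ⟨g, hg, hval⟩ := hφ 1 1 (Qpoly k n) hQJ StmtAux.Qpoly_wh
      norm_num at hg
      have hgC : g = C (constantCoeff g) := StmtAux.wh_zero_eq_C hg
      set c := constantCoeff g with hc_def
      by_cases hc : c = 0
      · have hg0 : g = 0 := by rw [hgC, hc, map_zero]
        exact memW hQJ (by rw [hval, hg0, map_zero])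
      · exfalso
        obtain ⟨d, hdeg, hdI⟩ := StmtAux.exists_monomial_not_mem hma
        set fS : Spoly k n := monomial d (1 : k) with hfS
        set fT : Tpoly k n := rename Sum.inl fS with hfT
        have hfT_mx : fT ∈ (mxIdeal k n) ^ a := by
          have h1 : fS ∈ (Ideal.span (Set.range (X : Fin n → Spoly k n))) ^ a := by
            rw [← hdeg]; exact StmtAux.monomial_mem_pow d
          have h2 : fT ∈ Ideal.map (rename Sum.inl)
              ((Ideal.span (Set.range (X : Fin n → Spoly k n))) ^ a) :=
            Ideal.mem_map_of_mem _ h1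
          rw [Ideal.map_pow] at h2
          have h3 : Ideal.map (rename (R := k) Sum.inl)
              (Ideal.span (Set.range (X : Fin n → Spoly k n))) = mxIdeal k n := by
            rw [Ideal.map_span, mxIdeal]
            congr 1
            ext q
            constructor
            · rintro ⟨_, ⟨i, rfl⟩, rfl⟩
              exact ⟨i, by simp⟩
            · rintro ⟨i, rfl⟩
              exact ⟨X i, ⟨i, rfl⟩, by simp⟩
          rwa [h3] at h2
        have hQsum : fT * Qpoly k n = ∑ i : Fin n, X (Sum.inr i) * (fT * X (Sum.inl i)) := by
          rw [Qpoly, Finset.mul_sum]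
          apply Finset.sum_congr rfl
          intros; ring
        have hmemJ_fTQ : fT * Qpoly k n ∈ frameIdeal I a b := Ideal.mul_mem_left _ _ hQJ
        have hW_fTQ : fT * Qpoly k n ∈ W := by
          rw [hQsum]
          apply Submodule.sum_mem
          intro i _
          have hterm_mem : fT * X (Sum.inl i) ∈ frameIdeal I a b := by
            rw [hJeq]
            refine Submodule.mem_sup_left (Submodule.mem_sup_left (Submodule.mem_sup_right ?_))
            rw [pow_succ]
            exact Ideal.mul_mem_mul hfT_mx (Ideal.subset_span ⟨i, rfl⟩)
          have hterm_wh : IsWeightedHomogeneous (bidegWeight n) (fT * X (Sum.inl i))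
              (((a + 1 : ℕ) : ℤ), 0) := by
            have hwh1 : (fS : Spoly k n).IsHomogeneous a := isHomogeneous_monomial (1 : k) hdeg
            have := (StmtAux.rename_inl_wh hwh1).mul
              (isWeightedHomogeneous_X (R := k) (bidegWeight n) (Sum.inl i))
            rw [show bidegWeight n (Sum.inl i) = (1, 0) from rfl, Prod.mk_add_mk] at this
            convert this using 2 <;> push_cast <;> ring
          have h0 := vanish hterm_mem _ _ hterm_wh (Or.inr (by norm_num))
          exact Submodule.smul_mem W (X (Sum.inr i)) (memW hterm_mem h0)
        have hφ_fTQ : φ ⟨fT * Qpoly k n, hmemJ_fTQ⟩ = Ideal.Quotient.mk (frameIdeal I a b) (fT * g) := by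
          have hsmul : (⟨fT * Qpoly k n, hmemJ_fTQ⟩ : frameIdeal I a b) = fT • ⟨Qpoly k n, hQJ⟩ := by
            apply Subtype.ext
            simp [smul_eq_mul]
          rw [hsmul, map_smul, hval]
          have : Ideal.Quotient.mk (frameIdeal I a b) (fT * g) = Ideal.Quotient.mk (frameIdeal I a b) (fT • g) := by
            rw [smul_eq_mul]
          rw [this]
          exact (Submodule.Quotient.mk_smul (frameIdeal I a b) fT g).symm
        have hzero : Ideal.Quotient.mk (frameIdeal I a b) (fT * g) = 0 := by
          rw [← hφ_fTQ]
          exact Wval hmemJ_fTQ hW_fTQ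
        have hmemJ' : fT * C c ∈ frameIdeal I a b := by
          have := Ideal.Quotient.eq_zero_iff_mem.mp hzero
          rwa [hgC] at this
        have hfTJ : fT ∈ frameIdeal I a b := by
          have hmul := Ideal.mul_mem_left (frameIdeal I a b) (C c⁻¹) hmemJ'
          have heq : C c⁻¹ * (fT * C c) = fT := by
            rw [mul_comm fT, ← mul_assoc, ← C_mul, inv_mul_cancel₀ hc, C_1, one_mul]
          rwa [heq] at hmul
        exact StmtAux.not_mem_frame hIhom hdeg hdI hfTJ
  apply LinearMap.ext
  rintro ⟨t, ht⟩
  rw [LinearMap.zero_apply]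
  exact Wval ht (hJW ht)
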